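/- Let X be a nonempty vertex set of a graph G such that every proper subset of X is a total mutual-visibility set of G. Then X is not a total mutual-visibility set if and only if there exist nonadjacent vertices v1 and v2 with N_G(v1) ∩ N_G(v2) = X. -/

import Mathlib

open SimpleGraph

variable {V : Type*}

/-- Vertices `u` and `v` are `X`-visible in `G`: some shortest `u,v`-walk has
no internal vertex in `X`. -/
def XVisible (G : SimpleGraph V) (X : Set V) (u v : V) : Prop :=
  ∃ p : G.Walk u v, p.length = G.dist u v ∧
    ∀ w ∈ p.support, w ≠ u → w ≠ v → w ∉ X

/-- `X` is a mutual-visibility set of `G`. -/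
def MutualVis (G : SimpleGraph V) (X : Set V) : Prop :=
  ∀ ⦃u⦄, u ∈ X → ∀ ⦃v⦄, v ∈ X → XVisible G X u v

/-- `X` is a total mutual-visibility set of `G`. -/
def TotalVis (G : SimpleGraph V) (X : Set V) : Prop :=
  ∀ u v : V, XVisible G X u v

/-- `X` is a dual mutual-visibility set of `G`. -/
def DualVis (G : SimpleGraph V) (X : Set V) : Prop :=
  MutualVis G X ∧ ∀ ⦃u⦄, u ∉ X → ∀ ⦃v⦄, v ∉ X → XVisible G X u v

/-- `X` is an outer mutual-visibility set of `G`. -/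
def OuterVis (G : SimpleGraph V) (X : Set V) : Prop :=
  MutualVis G X ∧ ∀ ⦃u⦄, u ∈ X → ∀ ⦃v⦄, v ∉ X → XVisible G X u v

/-- `S` induces a convex subgraph of `G`. -/
def IsConvexSet (G : SimpleGraph V) (S : Set V) : Prop :=
  ∀ u ∈ S, ∀ v ∈ S, ∀ p : G.Walk u v, p.length = G.dist u v →
    ∀ w ∈ p.support, w ∈ S

/-- The cycle graph on `ZMod n`. -/
def cyc (n : ℕ) : SimpleGraph (ZMod n) :=
  SimpleGraph.fromRel (fun u v => u - v = 1)


lemma xvis_self (G : SimpleGraph V) (X : Set V) (u : V) : XVisible G X u u :=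
  ⟨.nil, by simp [SimpleGraph.dist_self], by simp⟩

lemma xvis_of_adj {G : SimpleGraph V} (X : Set V) {u v : V} (h : G.Adj u v) :
    XVisible G X u v := by
  refine ⟨.cons h .nil, ?_, ?_⟩
  · simp [dist_eq_one_iff_adj.mpr h]
  · intro w hw hwu hwv
    simp [Walk.support_cons] at hw
    rcases hw with rfl | rfl <;> simp_all

lemma xvis_symm {G : SimpleGraph V} {X : Set V} {u v : V} (h : XVisible G X u v) :
    XVisible G X v u := by
  obtain ⟨p, hl, hs⟩ := h
  refine ⟨p.reverse, by simpa [dist_comm] using hl, ?_⟩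
  intro w hw hwv hwu
  exact hs w (by simpa using hw) hwu hwv

/-- Key step: under minimality, the neighbor of `u` on the shortest path equals `x`. -/
lemma key_adj {G : SimpleGraph V} (hG : G.Connected) {X : Set V} {u v x : V}
    (hmin : ∀ a b : V, G.dist a b < G.dist u v → XVisible G X a b)
    (hnv : ¬ XVisible G X u v) (hnadj : ¬ G.Adj u v)
    (P : G.Walk u v) (hPl : P.length = G.dist u v)
    (hPs : ∀ w ∈ P.support, w ≠ u → w ≠ v → w ∉ X \ {x}) :
    G.Adj u x := by
  have hd1 : 1 ≤ G.dist u v := by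
    rcases Nat.eq_zero_or_pos (G.dist u v) with h0 | h
    · exfalso
      have : u = v := by
        have : P.length = 0 := by omega
        exact P.eq_of_length_eq_zero this
      subst this
      exact hnv (xvis_self G X u)
    · exact h
  -- decompose P
  cases P with
  | nil => simp [SimpleGraph.dist_self] at hd1
  | @cons _ u' _ h q =>
    -- u' properties
    have hq : q.length = G.dist u v - 1 := by
      simp [Walk.length_cons] at hPl; omega
    have hu'u : u' ≠ u := h.ne'
    have hu'v : u' ≠ v := by rintro rfl; exact hnadj h
    have hdu' : G.dist u' v < G.dist u v := by
      have := dist_le q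
      omega
    -- u' ∈ X
    have hu'X : u' ∈ X := by
      by_contra hu'X
      apply hnv
      obtain ⟨Q, hQl, hQs⟩ := hmin u' v hdu'
      refine ⟨.cons h Q, ?_, ?_⟩
      · have h1 : G.dist u v ≤ 1 + G.dist u' v :=
          le_trans (hG.dist_triangle (v := u')) (by
            have : G.dist u u' ≤ 1 := by
              simpa using dist_le (SimpleGraph.Walk.cons h .nil)
            omega)
        have h2 : G.dist u' v ≤ q.length := dist_le q
        simp [Walk.length_cons, hQl]
        omega
      · intro w hw hwu hwv
        simp [Walk.support_cons] at hw
        rcases hw with rfl | hw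
        · exact absurd rfl hwu
        · rcases eq_or_ne w u' with rfl | hwu'
          · exact hu'X
          · exact hQs w hw hwu' hwv
    have : u' ∉ X \ {x} := hPs u' (by simp [Walk.support_cons]) hu'u hu'v
    have : u' = x := by
      simp [Set.mem_diff] at this
      exact this hu'X
    exact this ▸ h

lemma walk_len_two {G : SimpleGraph V} {u v : V} (p : G.Walk u v) (h : p.length = 2) :
    ∃ w, G.Adj u w ∧ G.Adj w v ∧ p.support = [u, w, v] := by
  cases p with
  | nil => simp at h
  | cons h1 q =>
    cases q with
    | nil => simp at h
    | cons h2 r =>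
      cases r with
      | nil => exact ⟨_, h1, h2, by simp⟩
      | cons h3 s => simp [Walk.length_cons] at h

theorem stmt_16 (G : SimpleGraph V) (hG : G.Connected) (X : Set V)
    (hne : X.Nonempty) (hsub : ∀ Y : Set V, Y ⊂ X → TotalVis G Y) :
    ¬ TotalVis G X ↔
      ∃ v₁ v₂ : V, v₁ ≠ v₂ ∧ ¬ G.Adj v₁ v₂ ∧
        G.neighborSet v₁ ∩ G.neighborSet v₂ = X := by
  classical
  constructor
  · intro hns
    simp only [TotalVis, not_forall] at hns
    obtain ⟨u₀, v₀, h₀⟩ := hns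
    have hS : ∃ n, ∃ u v : V, ¬ XVisible G X u v ∧ G.dist u v = n := ⟨_, u₀, v₀, h₀, rfl⟩
    obtain ⟨u, v, hnv, hd⟩ := Nat.find_spec hS
    have hmin : ∀ a b : V, G.dist a b < G.dist u v → XVisible G X a b := by
      intro a b hab
      by_contra hcon
      exact Nat.find_min hS (hd ▸ hab) ⟨a, b, hcon, rfl⟩
    have huv : u ≠ v := by rintro rfl; exact hnv (xvis_self G X u)
    have hnadj : ¬ G.Adj u v := fun h => hnv (xvis_of_adj X h)
    -- for each x in X : Adj u x ∧ Adj x v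
    have hadj : ∀ x ∈ X, G.Adj u x ∧ G.Adj x v := by
      intro x hx
      obtain ⟨P, hPl, hPs⟩ := hsub (X \ {x}) (Set.sdiff_singleton_ssubset.mpr hx) u v
      have h1 : G.Adj u x := key_adj hG hmin hnv hnadj P hPl hPs
      have h2 : G.Adj v x := by
        have hmin' : ∀ a b : V, G.dist a b < G.dist v u → XVisible G X a b := by
          intro a b hab; exact hmin a b (by rwa [SimpleGraph.dist_comm (G := G) (u := u) (v := v)])
        refine key_adj hG hmin' (fun hvis => hnv (xvis_symm hvis))
          (fun h => hnadj h.symm) P.reverse (by simp [SimpleGraph.dist_comm (G := G) (u := v) (v := u), hPl]) ?_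
        intro w hw hwv hwu
        exact hPs w (by simpa using hw) hwu hwv
      exact ⟨h1, h2.symm⟩
    obtain ⟨x₀, hx₀⟩ := hne
    have hd2 : G.dist u v = 2 := by
      have hle : G.dist u v ≤ 2 := by
        have := dist_le (SimpleGraph.Walk.cons (hadj x₀ hx₀).1
          (SimpleGraph.Walk.cons (hadj x₀ hx₀).2 .nil))
        simpa using this
      have h1 : G.dist u v ≠ 1 := fun h => hnadj (dist_eq_one_iff_adj.mp h)
      have := hG.pos_dist_of_ne huv
      omega
    refine ⟨u, v, huv, hnadj, ?_⟩
    ext w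
    simp only [Set.mem_inter_iff, mem_neighborSet]
    constructor
    · rintro ⟨h1, h2⟩
      by_contra hwX
      apply hnv
      refine ⟨.cons h1 (.cons h2.symm .nil), by simp [hd2], ?_⟩
      intro z hz hzu hzv
      simp [Walk.support_cons] at hz
      rcases hz with rfl | rfl | rfl
      · exact absurd rfl hzu
      · exact hwX
      · exact absurd rfl hzv
    · intro hw
      exact ⟨(hadj w hw).1, (hadj w hw).2.symm⟩
  · rintro ⟨v₁, v₂, h12, hnadj, hXeq⟩ hTV
    obtain ⟨p, hl, hs⟩ := hTV v₁ v₂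
    obtain ⟨x₀, hx₀⟩ := hne
    have hx₀' : x₀ ∈ G.neighborSet v₁ ∩ G.neighborSet v₂ := hXeq ▸ hx₀
    have hd2 : G.dist v₁ v₂ = 2 := by
      have hle : G.dist v₁ v₂ ≤ 2 := by
        have := dist_le (SimpleGraph.Walk.cons hx₀'.1 (SimpleGraph.Walk.cons hx₀'.2.symm .nil))
        exact this
      have h1 : G.dist v₁ v₂ ≠ 1 := fun h => hnadj (dist_eq_one_iff_adj.mp h)
      have := hG.pos_dist_of_ne h12
      omega
    obtain ⟨w, h1, h2, hsup⟩ := walk_len_two p (by rw [hl, hd2])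
    have hwX : w ∈ X := by
      rw [← hXeq]; exact ⟨h1, h2.symm⟩
    exact hs w (by rw [hsup]; simp) h1.ne' (h2.ne) hwX
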